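/- For any w ∈ ℝ^L, the intersection over all ε > 0 of argmax^ε(w) equals argmax(w) = {j ∈ [L] : w_j = max_ℓ w_ℓ}. Equivalently, for every j with w_j < max_ℓ w_ℓ there exists ε > 0 such that j ∉ argmax^ε(w). -/

import Mathlib

noncomputable section

/-- The set `R_j^ε = {w ∈ ℝ^L : w_j ≥ max_{ℓ≠j} w_ℓ + ε/√2}`. -/
def Rset (L : ℕ) (ε : ℝ) (j : Fin L) : Set (EuclideanSpace ℝ (Fin L)) :=
  {w | ∀ ℓ : Fin L, ℓ ≠ j → w ℓ + ε / Real.sqrt 2 ≤ w j}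

/-- The inflated argmax: `argmax^ε(w) = {j ∈ [L] : dist(w, R_j^ε) < ε}`. -/
def inflatedArgmax (L : ℕ) (ε : ℝ) (w : EuclideanSpace ℝ (Fin L)) : Set (Fin L) :=
  {j | Metric.infDist w (Rset L ε j) < ε}

lemma Rset_nonempty (L : ℕ) (ε : ℝ) (hε : 0 ≤ ε) (j : Fin L) :
    (Rset L ε j).Nonempty := by
  refine ⟨EuclideanSpace.single j (ε / Real.sqrt 2), fun ℓ hℓ => ?_⟩
  simp [EuclideanSpace.single_apply, hℓ]

/-- The intersection over all `ε > 0` of `argmax^ε(w)` equals the set of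
maximizing entries `argmax(w) = {j : w_j = max_ℓ w_ℓ}`. -/
theorem iInter_inflatedArgmax_eq_argmax (L : ℕ) (hL : 2 ≤ L)
    (w : EuclideanSpace ℝ (Fin L)) :
    (⋂ (ε : ℝ) (_ : 0 < ε), inflatedArgmax L ε w)
      = {j : Fin L | ∀ ℓ : Fin L, w ℓ ≤ w j} := by
  have hs2 : (0:ℝ) < Real.sqrt 2 := by positivity
  have hs2sq : Real.sqrt 2 ^ 2 = 2 := Real.sq_sqrt (by norm_num)
  ext j
  simp only [Set.mem_iInter, Set.mem_setOf_eq]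
  constructor
  · -- if j is in every inflated argmax, then w j is maximal
    intro h ℓ
    by_contra hlt
    push_neg at hlt
    set δ : ℝ := w ℓ - w j with hδ
    have hδpos : 0 < δ := by simp [hδ]; linarith
    have hℓj : ℓ ≠ j := by
      intro he; rw [he] at hlt; exact lt_irrefl _ hlt
    have hmem := h δ hδpos
    unfold inflatedArgmax at hmem
    simp only [Set.mem_setOf_eq] at hmem
    -- get a close point and derive a contradiction
    obtain ⟨v, hv, hdlt⟩ :=
      (Metric.infDist_lt_iff (Rset_nonempty L δ hδpos.le j)).mp hmem
    have hub : δ ≤ dist w v := by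
      have hvR : v ℓ + δ / Real.sqrt 2 ≤ v j := hv ℓ hℓj
      -- a = v j - w j, b = v ℓ - w ℓ, a - b ≥ δ/√2 + δ
      set a : ℝ := v j - w j
      set b : ℝ := v ℓ - w ℓ
      have hab : δ / Real.sqrt 2 + δ ≤ a - b := by
        simp only [a, b, hδ]
        have : δ / Real.sqrt 2 ≤ v j - v ℓ := by linarith
        linarith
      have hd : dist w v = Real.sqrt (∑ i, dist (w i) (v i) ^ 2) :=
        EuclideanSpace.dist_eq w v
      rw [hd]
      have hsum : a ^ 2 + b ^ 2 ≤ ∑ i, dist (w i) (v i) ^ 2 := by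
        have : ({j, ℓ} : Finset (Fin L)) ⊆ Finset.univ := Finset.subset_univ _
        have hpair : ∑ i ∈ ({j, ℓ} : Finset (Fin L)), dist (w i) (v i) ^ 2
            = dist (w j) (v j) ^ 2 + dist (w ℓ) (v ℓ) ^ 2 := by
          rw [Finset.sum_pair (Ne.symm hℓj)]
        have hle : ∑ i ∈ ({j, ℓ} : Finset (Fin L)), dist (w i) (v i) ^ 2
            ≤ ∑ i, dist (w i) (v i) ^ 2 := by
          apply Finset.sum_le_sum_of_subset_of_nonneg this
          intro i _ _; positivity
        have haj : dist (w j) (v j) ^ 2 = a ^ 2 := by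
          rw [Real.dist_eq]; rw [sq_abs]; simp only [a]; ring
        have hbl : dist (w ℓ) (v ℓ) ^ 2 = b ^ 2 := by
          rw [Real.dist_eq]; rw [sq_abs]; simp only [b]; ring
        rw [haj, hbl] at hpair
        linarith
      have hab2 : δ ^ 2 ≤ a ^ 2 + b ^ 2 := by
        have h1 : (δ / Real.sqrt 2 + δ) ^ 2 ≤ (a - b) ^ 2 := by
          have h0 : 0 ≤ δ / Real.sqrt 2 + δ := by positivity
          exact pow_le_pow_left₀ h0 hab 2
        have h2 : (a - b) ^ 2 ≤ 2 * (a ^ 2 + b ^ 2) := by nlinarith [sq_nonneg (a + b)]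
        have h3 : 2 * δ ^ 2 ≤ (δ / Real.sqrt 2 + δ) ^ 2 := by
          set c : ℝ := δ / Real.sqrt 2 with hc
          have hq : c * Real.sqrt 2 = δ := div_mul_cancel₀ δ hs2.ne'
          have h1le : (1:ℝ) ≤ Real.sqrt 2 := by nlinarith [hs2sq, hs2]
          have key : (c + δ) ^ 2 = 3 * c ^ 2 + 2 * Real.sqrt 2 * c ^ 2 := by
            rw [← hq, add_sq, mul_pow, hs2sq]; ring
          have hd2 : δ ^ 2 = 2 * c ^ 2 := by
            rw [← hq, mul_pow, hs2sq]; ring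
          rw [key, hd2]
          nlinarith [sq_nonneg c, h1le]
        have hchain : 2 * δ ^ 2 ≤ 2 * (a ^ 2 + b ^ 2) := h3.trans (h1.trans h2)
        linarith [hchain]
      rw [show δ = Real.sqrt (δ ^ 2) by rw [Real.sqrt_sq hδpos.le]]
      apply Real.sqrt_le_sqrt
      linarith
    linarith
  · -- if w j is maximal, then j is in every inflated argmax
    intro hmax ε hε
    unfold inflatedArgmax
    simp only [Set.mem_setOf_eq]
    have hmem : (w + EuclideanSpace.single j (ε / Real.sqrt 2)) ∈ Rset L ε j := by
      intro ℓ hℓ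
      have h1 : (w + EuclideanSpace.single j (ε / Real.sqrt 2)) ℓ = w ℓ := by
        simp [EuclideanSpace.single_apply, hℓ]
      have h2 : (w + EuclideanSpace.single j (ε / Real.sqrt 2)) j
          = w j + ε / Real.sqrt 2 := by
        simp [EuclideanSpace.single_apply]
      rw [h1, h2]
      linarith [hmax ℓ]
    calc Metric.infDist w (Rset L ε j)
        ≤ dist w (w + EuclideanSpace.single j (ε / Real.sqrt 2)) :=
          Metric.infDist_le_dist_of_mem hmem
      _ = ε / Real.sqrt 2 := by
          rw [dist_self_add_right, EuclideanSpace.norm_single]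
          rw [Real.norm_eq_abs, abs_of_pos (by positivity)]
      _ < ε := by
          rw [div_lt_iff₀ hs2]
          nlinarith [hs2sq, hs2]
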